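/- Let X be a compact metric space, d ∈ ℕ, and T₁,…,T_d commuting homeomorphisms of X. Let A = {n_α}_{α∈ℱ} be an IP-set in ℤ. Suppose that for all 1 ≤ i ≤ d and all j ≠ k in {1,…,d}, the systems (X,Tᵢ) and (X, T_j T_k⁻¹) are minimal and mixing along A. Then for all nonempty open subsets U, V₁,…,V_d of X, the set {n ∈ ℤ : U ∩ T₁^{-n}V₁ ∩ ⋯ ∩ T_d^{-n}V_d ≠ ∅} belongs to 𝒢_A*. -/

import Mathlib

open Set Pointwise

/-- The set of finite sums of a sequence of integers. -/
def FS (n : ℕ → ℤ) : Set ℤ :=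
  {m | ∃ s : Finset ℕ, s.Nonempty ∧ m = ∑ i ∈ s, n i}

/-- `A` is an IP-set if it contains all finite sums of some integer sequence. -/
def IsIPSet (A : Set ℤ) : Prop := ∃ n : ℕ → ℤ, FS n ⊆ A

/-- `B` is an IP*-set if it meets every IP-set. -/
def IsIPStar (B : Set ℤ) : Prop := ∀ A : Set ℤ, IsIPSet A → (B ∩ A).Nonempty

/-- `α < β` for finite subsets of ℕ: every element of `α` is less than every element of `β`. -/
def FinsetLt (α β : Finset ℕ) : Prop := ∀ x ∈ α, ∀ y ∈ β, x < y

/-- A sequence `α₁ < α₂ < ⋯` of nonempty finite subsets of ℕ generating an IP-ring. -/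
def IsIPRingSeq (a : ℕ → Finset ℕ) : Prop :=
  (∀ i, (a i).Nonempty) ∧ ∀ i, FinsetLt (a i) (a (i + 1))

/-- The IP-ring `FU((αᵢ))`: all finite unions of the `αᵢ`. -/
def FU (a : ℕ → Finset ℕ) : Set (Finset ℕ) :=
  {s | ∃ β : Finset ℕ, β.Nonempty ∧ s = β.biUnion a}

/-- `n_α = ∑_{i ∈ α} nᵢ`. -/
def sumIdx (n : ℕ → ℤ) (α : Finset ℕ) : ℤ := ∑ i ∈ α, n i

/-- The family `𝒢_A` of subsets of ℤ containing some IP-subset of the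
IP-set `A = {n_α}_{α ∈ ℱ}`. -/
def GA (n : ℕ → ℤ) : Set (Set ℤ) :=
  {B | ∃ a : ℕ → Finset ℕ, IsIPRingSeq a ∧ sumIdx n '' FU a ⊆ B}

/-- The dual family `𝒢*`. -/
def dualFam (G : Set (Set ℤ)) : Set (Set ℤ) :=
  {B | ∀ A ∈ G, (B ∩ A).Nonempty}

/-- Natural powers of a homeomorphism. -/
def hnpow {X : Type*} [TopologicalSpace X] (T : X ≃ₜ X) : ℕ → X ≃ₜ X
  | 0 => Homeomorph.refl X
  | (k + 1) => (hnpow T k).trans T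

/-- Integer powers of a homeomorphism. -/
def hzpow {X : Type*} [TopologicalSpace X] (T : X ≃ₜ X) : ℤ → X ≃ₜ X
  | Int.ofNat k => hnpow T k
  | Int.negSucc k => (hnpow T (k + 1)).symm

/-- A homeomorphism is minimal if every (two-sided) orbit is dense. -/
def IsMinimalHomeo {X : Type*} [TopologicalSpace X] (T : X ≃ₜ X) : Prop :=
  ∀ x : X, Dense (Set.range fun m : ℤ => hzpow T m x)

/-- `(X,T)` is mixing along the IP-set `A = {n_α}`: every `N(U,V)` belongs to `𝒢_A*`. -/
def MixingAlong {X : Type*} [TopologicalSpace X] (T : X ≃ₜ X) (n : ℕ → ℤ) : Prop :=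
  ∀ U V : Set X, IsOpen U → IsOpen V → U.Nonempty → V.Nonempty →
    {m : ℤ | (U ∩ hzpow T m ⁻¹' V).Nonempty} ∈ dualFam (GA n)

/-- `(X,T)` is topologically mildly mixing: every `N(U,V)` is an IP*-set. -/
def TopMildlyMixing {X : Type*} [TopologicalSpace X] (T : X ≃ₜ X) : Prop :=
  ∀ U V : Set X, IsOpen U → IsOpen V → U.Nonempty → V.Nonempty →
    IsIPStar {m : ℤ | (U ∩ hzpow T m ⁻¹' V).Nonempty}

/-- An integral polynomial: an integer-valued function which is given by a
polynomial (with rational coefficients) on ℤ. -/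
def IsIntPoly (p : ℤ → ℤ) : Prop :=
  ∃ q : Polynomial ℚ, ∀ m : ℤ, (p m : ℚ) = q.eval (m : ℚ)

section HomeoGroup
variable {X : Type*} [TopologicalSpace X]

instance homeoGroup : Group (X ≃ₜ X) where
  mul f g := g.trans f
  one := Homeomorph.refl X
  inv := Homeomorph.symm
  mul_assoc f g h := Homeomorph.ext fun _ => rfl
  one_mul f := Homeomorph.ext fun _ => rfl
  mul_one f := Homeomorph.ext fun _ => rfl
  inv_mul_cancel f := Homeomorph.ext fun x => f.symm_apply_apply x

@[simp] lemma homeo_mul_apply (f g : X ≃ₜ X) (x : X) : (f * g) x = f (g x) := rfl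
@[simp] lemma homeo_one_apply (x : X) : (1 : X ≃ₜ X) x = x := rfl
lemma homeo_inv_eq_symm (f : X ≃ₜ X) : f⁻¹ = f.symm := rfl

lemma hnpow_eq_pow (T : X ≃ₜ X) (k : ℕ) : hnpow T k = T ^ k := by
  induction k with
  | zero => rfl
  | succ k ih =>
    show (hnpow T k).trans T = T ^ (k+1)
    rw [ih, pow_succ']
    rfl

lemma hzpow_eq_zpow (T : X ≃ₜ X) (m : ℤ) : hzpow T m = T ^ m := by
  cases m with
  | ofNat k => show hnpow T k = T ^ (Int.ofNat k); rw [hnpow_eq_pow]; exact (zpow_natCast T k).symm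
  | negSucc k =>
    show (hnpow T (k+1)).symm = T ^ (Int.negSucc k)
    rw [hnpow_eq_pow, zpow_negSucc]
    rfl

lemma zpow_apply_add (T : X ≃ₜ X) (m n : ℤ) (x : X) :
    (T ^ (m + n)) x = (T ^ m) ((T ^ n) x) := by
  rw [zpow_add]; rfl

lemma commute_of_trans_eq {f g : X ≃ₜ X} (h : f.trans g = g.trans f) : Commute f g := by
  have : g * f = f * g := by
    have h1 : f.trans g = g * f := rfl
    have h2 : g.trans f = f * g := rfl
    rw [← h1, ← h2, h]
  exact this.symm
end HomeoGroup

section UltraIP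
open Filter
attribute [local instance] Ultrafilter.add Ultrafilter.addSemigroup

/-- Idempotent ultrafilter containing all tail FS-sets. -/
theorem exists_idem_tails (a : Stream' ℤ) :
    ∃ U : Ultrafilter ℤ, U + U = U ∧ ∀ n, {m : ℤ | m ∈ Hindman.FS (a.drop n)} ∈ U := by
  let S : Set (Ultrafilter ℤ) := ⋂ n, { U | ∀ᶠ m in U, m ∈ Hindman.FS (a.drop n) }
  have h := exists_idempotent_in_compact_add_subsemigroup ?_ S ?_ ?_ ?_
  · rcases h with ⟨U, hU, U_idem⟩
    exact ⟨U, U_idem, fun n => Set.mem_iInter.mp hU n⟩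
  · exact Ultrafilter.continuous_add_left
  · apply IsCompact.nonempty_iInter_of_sequence_nonempty_isCompact_isClosed
    · intro n U hU
      filter_upwards [hU]
      rw [← Stream'.drop_drop, ← Stream'.tail_eq_drop]
      exact Hindman.FS.tail' _
    · intro n
      exact ⟨pure _, mem_pure.mpr <| Hindman.FS.head' _⟩
    · exact (ultrafilter_isClosed_basic _).isCompact
    · intro n
      apply ultrafilter_isClosed_basic
  · exact IsClosed.isCompact (isClosed_iInter fun i => ultrafilter_isClosed_basic _)
  · intro U hU V hV
    rw [Set.mem_iInter] at *
    intro n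
    rw [Set.mem_setOf_eq, Ultrafilter.eventually_add]
    filter_upwards [hU n] with m hm
    obtain ⟨n', hn⟩ := Hindman.FS.add hm
    filter_upwards [hV (n + n')] with m' hm'
    apply hn
    simpa only [Stream'.drop_drop] using hm'

/-- Decode an element of a Hindman FS-set as a finite subset sum. -/
theorem FS_decode {a : Stream' ℤ} {m : ℤ} (h : m ∈ Hindman.FS a) :
    ∃ s : Finset ℕ, s.Nonempty ∧ m = ∑ i ∈ s, a.get i := by
  induction h with
  | head' a => exact ⟨{0}, ⟨0, Finset.mem_singleton_self 0⟩, by simp [Stream'.head]⟩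
  | tail' a m _ ih =>
    obtain ⟨s, hs, hsum⟩ := ih
    refine ⟨s.image Nat.succ, hs.image _, ?_⟩
    rw [Finset.sum_image (fun x _ y _ h => Nat.succ_injective h)]
    rw [hsum]
    rfl
  | cons' a m _ ih =>
    obtain ⟨s, hs, hsum⟩ := ih
    refine ⟨insert 0 (s.image Nat.succ), ⟨0, Finset.mem_insert_self 0 _⟩, ?_⟩
    rw [Finset.sum_insert (by simp)]
    rw [Finset.sum_image (fun x _ y _ h => Nat.succ_injective h), hsum]
    rfl

end UltraIP

section RingLemmas

lemma ringseq_lt {a0 : ℕ → Finset ℕ} (ha0 : IsIPRingSeq a0) {i j : ℕ} (hij : i < j) :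
    FinsetLt (a0 i) (a0 j) := by
  induction j with
  | zero => omega
  | succ j ih =>
    rcases Nat.lt_succ_iff_lt_or_eq.mp hij with h | h
    · intro x hx y hy
      obtain ⟨z, hz⟩ := ha0.1 j
      exact lt_trans (ih h x hx z hz) (ha0.2 j z hz y hy)
    · subst h; exact ha0.2 i

lemma ringseq_disj {a0 : ℕ → Finset ℕ} (ha0 : IsIPRingSeq a0) {i j : ℕ} (hij : i ≠ j) :
    Disjoint (a0 i) (a0 j) := by
  rcases hij.lt_or_gt with h | h
  · exact Finset.disjoint_left.mpr fun x hx hx' => lt_irrefl x (ringseq_lt ha0 h x hx x hx')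
  · exact Finset.disjoint_left.mpr fun x hx hx' => lt_irrefl x (ringseq_lt ha0 h x hx' x hx)

lemma sumIdx_biUnion (nseq : ℕ → ℤ) {s : Finset ℕ} {t : ℕ → Finset ℕ}
    (h : (↑s : Set ℕ).PairwiseDisjoint t) :
    sumIdx nseq (s.biUnion t) = ∑ i ∈ s, sumIdx nseq (t i) :=
  Finset.sum_biUnion h

end RingLemmas

section GGsec
open Filter
attribute [local instance] Ultrafilter.add Ultrafilter.addSemigroup

/-- The stream of block sums of an IP ring sequence. -/
def ggStream (nseq : ℕ → ℤ) (a0 : ℕ → Finset ℕ) : Stream' ℤ := fun j => sumIdx nseq (a0 j)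

lemma star_mem {p : Ultrafilter ℤ} (hp : p + p = p) {C : Set ℤ} (hC : C ∈ p) :
    {x : ℤ | {y : ℤ | x + y ∈ C} ∈ p} ∈ p := by
  have h1 : ∀ᶠ m in ↑(p + p), m ∈ C := by rw [hp]; exact hC
  rw [Ultrafilter.eventually_add] at h1
  exact h1

/-- Galvin–Glazer: every member of an idempotent ultrafilter containing all tail
FS-sets of an IP ring contains the image of a sub-IP-ring. -/
theorem GG_main {nseq : ℕ → ℤ} {a0 : ℕ → Finset ℕ} (ha0 : IsIPRingSeq a0)
    {p : Ultrafilter ℤ} (hp : p + p = p)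
    (hA : ∀ k, {m : ℤ | m ∈ Hindman.FS ((ggStream nseq a0).drop k)} ∈ p)
    {B : Set ℤ} (hB : B ∈ p) :
    ∃ b : ℕ → Finset ℕ, IsIPRingSeq b ∧ sumIdx nseq '' FU b ⊆ B := by
  classical
  have key : ∀ (C : Set ℤ), C ∈ p → ∀ k : ℕ, ∃ (x : ℤ) (α : Finset ℕ) (k' : ℕ),
      x ∈ C ∧ ({y : ℤ | x + y ∈ C} ∈ p) ∧ x = sumIdx nseq α ∧ α.Nonempty ∧ k < k' ∧
      (∀ t ∈ α, ∃ u, k ≤ u ∧ u < k' ∧ t ∈ a0 u) := by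
    intro C hC k
    have hD : (C ∩ ({x : ℤ | {y : ℤ | x + y ∈ C} ∈ p} ∩
        {m : ℤ | m ∈ Hindman.FS ((ggStream nseq a0).drop k)})) ∈ p :=
      inter_mem hC (inter_mem (star_mem hp hC) (hA k))
    obtain ⟨x, hxC, hxS, hxF⟩ := Ultrafilter.nonempty_of_mem hD
    obtain ⟨s, hs, hsum⟩ := FS_decode hxF
    have hget : ∀ i : ℕ, ((ggStream nseq a0).drop k).get i = sumIdx nseq (a0 (i + k)) := by
      intro i
      rw [Stream'.get_drop, Nat.add_comm]
      rfl
    refine ⟨x, (s.image (· + k)).biUnion a0, s.max' hs + k + 1, hxC, hxS, ?_, ?_, ?_, ?_⟩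
    · rw [sumIdx_biUnion nseq, Finset.sum_image (fun x _ y _ h => by omega)]
      · rw [hsum]
        exact Finset.sum_congr rfl fun i _ => hget i
      · intro u hu v hv huv
        exact ringseq_disj ha0 huv
    · obtain ⟨i, hi⟩ := hs
      obtain ⟨z, hz⟩ := ha0.1 (i + k)
      exact ⟨z, Finset.mem_biUnion.mpr ⟨i + k, Finset.mem_image.mpr ⟨i, hi, rfl⟩, hz⟩⟩
    · omega
    · intro t ht
      obtain ⟨j, hj, htj⟩ := Finset.mem_biUnion.mp ht
      obtain ⟨i, hi, rfl⟩ := Finset.mem_image.mp hj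
      exact ⟨i + k, by omega, by have := Finset.le_max' s i hi; omega, htj⟩
  choose fx fα fk' hmem hshift hsum hne hklt hblock using key
  -- the recursively constructed chain of states
  let St := {C : Set ℤ // C ∈ p} × ℕ
  let nextC : St → St := fun st =>
    ⟨⟨st.1.1 ∩ {y : ℤ | fx st.1.1 st.1.2 st.2 + y ∈ st.1.1},
      inter_mem st.1.2 (hshift st.1.1 st.1.2 st.2)⟩, fk' st.1.1 st.1.2 st.2⟩
  let ch : ℕ → St := fun n => Nat.rec (⟨⟨B, hB⟩, 0⟩ : St) (fun _ st => nextC st) n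
  have ch_succ : ∀ j, ch (j + 1) = nextC (ch j) := fun j => rfl
  let xj : ℕ → ℤ := fun j => fx (ch j).1.1 (ch j).1.2 (ch j).2
  let bj : ℕ → Finset ℕ := fun j => fα (ch j).1.1 (ch j).1.2 (ch j).2
  -- basic facts
  have hCsub : ∀ j, (ch (j + 1)).1.1 ⊆ (ch j).1.1 := fun j => Set.inter_subset_left
  have hCmono : ∀ i j, i ≤ j → (ch j).1.1 ⊆ (ch i).1.1 := by
    intro i j hij
    induction j with
    | zero => have : i = 0 := by omega
              subst this; exact fun x hx => hx
    | succ j ih =>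
      rcases Nat.le_succ_iff_eq_or_le.mp hij with h | h
      · subst h; exact fun x hx => hx
      · exact fun x hx => ih h (hCsub j hx)
  have hkmono : ∀ j, (ch j).2 < (ch (j + 1)).2 := fun j => hklt (ch j).1.1 (ch j).1.2 (ch j).2
  have hkmono_le : ∀ i j, i ≤ j → (ch i).2 ≤ (ch j).2 := by
    intro i j hij
    induction j with
    | zero => have : i = 0 := by omega
              subst this; exact le_refl _
    | succ j ih =>
      rcases Nat.le_succ_iff_eq_or_le.mp hij with h | h
      · subst h; exact le_refl _
      · exact le_trans (ih h) (le_of_lt (hkmono j))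
  have hblockj : ∀ j, ∀ t ∈ bj j, ∃ u, (ch j).2 ≤ u ∧ u < (ch (j + 1)).2 ∧ t ∈ a0 u := by
    intro j
    have := hblock (ch j).1.1 (ch j).1.2 (ch j).2
    rw [ch_succ]
    exact this
  have hltb : ∀ i j, i < j → FinsetLt (bj i) (bj j) := by
    intro i j hij t ht t' ht'
    obtain ⟨u, hu1, hu2, hu3⟩ := hblockj i t ht
    obtain ⟨v, hv1, hv2, hv3⟩ := hblockj j t' ht'
    have huv : u < v := lt_of_lt_of_le hu2 (le_trans (hkmono_le (i+1) j hij) hv1)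
    exact ringseq_lt ha0 huv t hu3 t' hv3
  -- sums of chain elements
  have hsums : ∀ s : Finset ℕ, ∀ hs : s.Nonempty, (∑ j ∈ s, xj j) ∈ (ch (s.min' hs)).1.1 := by
    intro s
    induction s using Finset.strongInduction with
    | _ s ih =>
      intro hs
      set j0 := s.min' hs with hj0
      have hj0s : j0 ∈ s := s.min'_mem hs
      rcases (s.erase j0).eq_empty_or_nonempty with h | h
      · have : s = {j0} := by
          apply Finset.eq_singleton_iff_unique_mem.mpr
          exact ⟨hj0s, fun x hx => by
            by_contra hne'
            exact (Finset.notMem_empty x) (h ▸ Finset.mem_erase.mpr ⟨hne', hx⟩)⟩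
        rw [this, Finset.sum_singleton]
        exact hmem (ch j0).1.1 (ch j0).1.2 (ch j0).2
      · have hsub : s.erase j0 ⊂ s := Finset.erase_ssubset hj0s
        have hsum' := ih (s.erase j0) hsub h
        have hmin' : j0 + 1 ≤ (s.erase j0).min' h := by
          have hm : (s.erase j0).min' h ∈ s.erase j0 := Finset.min'_mem _ _
          have h1 : (s.erase j0).min' h ≠ j0 := (Finset.mem_erase.mp hm).1
          have h2 : j0 ≤ (s.erase j0).min' h := s.min'_le _ (Finset.mem_erase.mp hm).2
          omega
        have hsum'' : (∑ j ∈ s.erase j0, xj j) ∈ (ch (j0 + 1)).1.1 :=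
          hCmono _ _ hmin' hsum'
        have : (∑ j ∈ s.erase j0, xj j) ∈ {y : ℤ | xj j0 + y ∈ (ch j0).1.1} := by
          rw [ch_succ] at hsum''
          exact hsum''.2
        have hfin : xj j0 + (∑ j ∈ s.erase j0, xj j) ∈ (ch j0).1.1 := this
        rwa [Finset.add_sum_erase s xj hj0s] at hfin
  -- conclusion
  refine ⟨bj, ⟨fun j => hne (ch j).1.1 (ch j).1.2 (ch j).2, fun j => hltb j (j+1) (by omega)⟩, ?_⟩
  rintro m ⟨γ, ⟨β, hβ, rfl⟩, rfl⟩
  have hdisj : (↑β : Set ℕ).PairwiseDisjoint bj := by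
    intro u hu v hv huv
    rcases huv.lt_or_gt with h | h
    · exact Finset.disjoint_left.mpr fun x hx hx' => lt_irrefl x (hltb u v h x hx x hx')
    · exact Finset.disjoint_left.mpr fun x hx hx' => lt_irrefl x (hltb v u h x hx' x hx)
  rw [sumIdx_biUnion nseq hdisj]
  have : ∀ j ∈ β, sumIdx nseq (bj j) = xj j := fun j _ =>
    (hsum (ch j).1.1 (ch j).1.2 (ch j).2).symm
  rw [Finset.sum_congr rfl this]
  exact hCmono 0 (β.min' hβ) (Nat.zero_le _) (hsums β hβ)

end GGsec

section Dynamics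
open Filter
attribute [local instance] Ultrafilter.add Ultrafilter.addSemigroup

variable {X : Type*} [MetricSpace X] [CompactSpace X]

/-- Mixing with respect to an ultrafilter. -/
def mixP (p : Ultrafilter ℤ) (T : X ≃ₜ X) : Prop :=
  ∀ U V : Set X, IsOpen U → IsOpen V → U.Nonempty → V.Nonempty →
    {n : ℤ | ∃ x ∈ U, (T ^ n : X ≃ₜ X) x ∈ V} ∈ p

/-- `Φ^n(Δ U)` for the product action. -/
def orbitSet {e : ℕ} (S : Fin e → X ≃ₜ X) (U : Set X) (n : ℤ) : Set (Fin e → X) :=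
  {z | ∃ x ∈ U, ∀ i, z i = ((S i) ^ n : X ≃ₜ X) x}

def pDense {Y : Type*} [TopologicalSpace Y] (p : Ultrafilter ℤ) (F : ℤ → Set Y) : Prop :=
  ∀ O : Set Y, IsOpen O → O.Nonempty → {n : ℤ | (F n ∩ O).Nonempty} ∈ p

def Lset {Y : Type*} [TopologicalSpace Y] (p : Ultrafilter ℤ) (F : ℤ → Set Y) : Set Y :=
  {z | ∀ O : Set Y, IsOpen O → z ∈ O → {n : ℤ | (F n ∩ O).Nonempty} ∈ p}

lemma isClosed_Lset {Y : Type*} [TopologicalSpace Y] (p : Ultrafilter ℤ) (F : ℤ → Set Y) :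
    IsClosed (Lset p F) := by
  rw [← isOpen_compl_iff]
  rw [isOpen_iff_forall_mem_open]
  intro z hz
  simp only [Set.mem_compl_iff, Lset, Set.mem_setOf_eq] at hz
  push_neg at hz
  obtain ⟨O, hO, hzO, hbad⟩ := hz
  refine ⟨O, ?_, hO, hzO⟩
  intro z' hz'
  simp only [Set.mem_compl_iff, Lset, Set.mem_setOf_eq]
  push_neg
  exact ⟨O, hO, hz', hbad⟩

lemma Lset_preimage {Y : Type*} [TopologicalSpace Y] (p : Ultrafilter ℤ) (h : Y ≃ₜ Y)
    (F : ℤ → Set Y) : Lset p (fun n => ⇑h ⁻¹' (F n)) = ⇑h ⁻¹' Lset p F := by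
  ext z
  simp only [Lset, Set.mem_setOf_eq, Set.mem_preimage]
  constructor
  · intro hz O hO hzO
    have h1 := hz (⇑h ⁻¹' O) (h.isOpen_preimage.mpr hO) (by simpa using hzO)
    refine mem_of_superset h1 ?_
    rintro n ⟨y, hy1, hy2⟩
    exact ⟨h y, hy1, hy2⟩
  · intro hz O hO hzO
    have h1 := hz (⇑h.symm ⁻¹' O) (h.symm.isOpen_preimage.mpr hO)
      (by simp only [Set.mem_preimage, Homeomorph.symm_apply_apply]; exact hzO)
    refine mem_of_superset h1 ?_
    rintro n ⟨y, hy1, hy2⟩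
    refine ⟨h.symm y, ?_, hy2⟩
    simp only [Set.mem_preimage, Homeomorph.apply_symm_apply]
    exact hy1

lemma minimal_cover (T : X ≃ₜ X) (hT : IsMinimalHomeo T) {U : Set X} (hU : IsOpen U)
    (hUne : U.Nonempty) : ∃ F : Finset ℤ, ∀ x : X, ∃ k ∈ F, ((T ^ k : X ≃ₜ X)) x ∈ U := by
  have hG : ∀ m : ℤ, IsOpen (⇑(T ^ m : X ≃ₜ X) ⁻¹' U) :=
    fun m => (T ^ m : X ≃ₜ X).isOpen_preimage.mpr hU
  have hcov : (Set.univ : Set X) ⊆ ⋃ m : ℤ, ⇑(T ^ m : X ≃ₜ X) ⁻¹' U := by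
    intro x _
    obtain ⟨y, ⟨m, rfl⟩, hyU⟩ := (hT x).exists_mem_open hU hUne
    simp only [hzpow_eq_zpow] at hyU
    exact Set.mem_iUnion.mpr ⟨m, hyU⟩
  obtain ⟨F, hF⟩ := isCompact_univ.elim_finite_subcover _ hG hcov
  refine ⟨F, fun x => ?_⟩
  obtain ⟨m, hm, hx⟩ := Set.mem_iUnion₂.mp (hF (Set.mem_univ x))
  exact ⟨m, hm, hx⟩

omit [CompactSpace X] in
lemma open_contains_box {e : ℕ} [Nonempty X] {W : Set (Fin e → X)} (hW : IsOpen W)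
    (hWne : W.Nonempty) : ∃ O : Fin e → Set X, (∀ i, IsOpen (O i)) ∧ (∀ i, (O i).Nonempty) ∧
    Set.univ.pi O ⊆ W := by
  classical
  obtain ⟨f, hf⟩ := hWne
  obtain ⟨I, u, h1, h2⟩ := isOpen_pi_iff.mp hW f hf
  refine ⟨fun i => if i ∈ I then u i else Set.univ, ?_, ?_, ?_⟩
  · intro i
    by_cases hi : i ∈ I <;> simp [hi]
    exact (h1 i hi).1
  · intro i
    by_cases hi : i ∈ I <;> simp [hi]
    exact ⟨f i, (h1 i hi).2⟩
  · intro z hz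
    apply h2
    intro i hi
    have := hz i (Set.mem_univ i)
    simpa [Finset.mem_coe.mp hi] using this
end Dynamics

section MainInd
open Filter
attribute [local instance] Ultrafilter.add Ultrafilter.addSemigroup

variable {X : Type*} [MetricSpace X] [CompactSpace X]

theorem mainInd (p : Ultrafilter ℤ) (hp : p + p = p) :
    ∀ (e : ℕ) (S : Fin e → X ≃ₜ X),
    (∀ i j, Commute (S i) (S j)) →
    (∀ i, IsMinimalHomeo (S i)) →
    (∀ i, mixP p (S i)) →
    (∀ i j, i ≠ j → IsMinimalHomeo (S i * (S j)⁻¹) ∧ mixP p (S i * (S j)⁻¹)) →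
    ∀ U : Set X, IsOpen U → U.Nonempty → pDense p (orbitSet S U) := by
  intro e
  induction e with
  | zero =>
    intro S _ _ _ _ U _ hUne O _ hOne
    obtain ⟨x₀, hx₀⟩ := hUne
    obtain ⟨z₀, hz₀⟩ := hOne
    refine mem_of_superset univ_mem ?_
    intro n _
    refine ⟨z₀, ⟨x₀, hx₀, fun i => i.elim0⟩, hz₀⟩
  | succ e IH =>
    intro S hc hmin hmix hmin2 U hU hUne
    haveI : Nonempty X := ⟨hUne.choose⟩
    classical
    -- the auxiliary maps
    set R : Fin e → X ≃ₜ X := fun i => S i.succ * (S 0)⁻¹ with hR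
    have hcR : ∀ i j, Commute (R i) (R j) := by
      intro i j
      have h1 : Commute (S i.succ) (S j.succ) := hc _ _
      have h2 : Commute ((S 0)⁻¹) (S j.succ) := (hc 0 j.succ).inv_left
      have h3 : Commute (S i.succ) ((S 0)⁻¹) := (hc i.succ 0).inv_right
      have h4 : Commute ((S 0)⁻¹) ((S 0)⁻¹) := Commute.refl _
      exact (h1.mul_left h2).mul_right (h3.mul_left h4)
    have hminR : ∀ i, IsMinimalHomeo (R i) := fun i =>
      (hmin2 i.succ 0 (Fin.succ_ne_zero i)).1
    have hmixR : ∀ i, mixP p (R i) := fun i =>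
      (hmin2 i.succ 0 (Fin.succ_ne_zero i)).2
    have hRR : ∀ i j, R i * (R j)⁻¹ = S i.succ * (S j.succ)⁻¹ := by
      intro i j
      rw [hR]
      group
    have hmin2R : ∀ i j, i ≠ j → IsMinimalHomeo (R i * (R j)⁻¹) ∧ mixP p (R i * (R j)⁻¹) := by
      intro i j hij
      rw [hRR i j]
      exact hmin2 i.succ j.succ (fun h => hij (Fin.succ_injective _ h))
    have IHR := IH R hcR hminR hmixR hmin2R
    -- zpow of R i
    have hRpow : ∀ (i : Fin e) (n : ℤ) (y : X),
        ((R i ^ n : X ≃ₜ X)) y = ((S i.succ ^ n : X ≃ₜ X)) (((S 0 ^ n : X ≃ₜ X)).symm y) := by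
      intro i n y
      have h3 : Commute (S i.succ) ((S 0)⁻¹) := (hc i.succ 0).inv_right
      have : (R i) ^ n = (S i.succ) ^ n * ((S 0) ^ n)⁻¹ := by
        rw [hR]
        rw [h3.mul_zpow, inv_zpow]
      rw [this]
      rfl
    -- Step 1: the full graph family is p-dense
    have gammaDense : pDense p (orbitSet S Set.univ) := by
      intro O hO hOne
      obtain ⟨O', hO'o, hO'ne, hO'sub⟩ := open_contains_box hO hOne
      have hboxo : IsOpen (Set.univ.pi fun i : Fin e => O' i.succ) :=
        isOpen_set_pi Set.finite_univ (fun i _ => hO'o i.succ)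
      have hboxne : (Set.univ.pi fun i : Fin e => O' i.succ).Nonempty :=
        Set.univ_pi_nonempty_iff.mpr (fun i => hO'ne i.succ)
      have h1 := IHR (O' 0) (hO'o 0) (hO'ne 0) _ hboxo hboxne
      refine mem_of_superset h1 ?_
      rintro n ⟨z', ⟨y, hy0, hz'⟩, hzbox⟩
      set x : X := ((S 0 ^ n : X ≃ₜ X)).symm y with hxdef
      refine ⟨fun i => ((S i ^ n : X ≃ₜ X)) x, ⟨x, Set.mem_univ x, fun i => rfl⟩, ?_⟩
      apply hO'sub
      intro i _
      refine Fin.cases ?_ ?_ i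
      · simpa [hxdef] using hy0
      · intro i'
        show ((S i'.succ ^ n : X ≃ₜ X)) x ∈ O' i'.succ
        have heq : ((S i'.succ ^ n : X ≃ₜ X)) x = z' i' := by
          rw [hz' i', hRpow, ← hxdef]
        rw [heq]
        exact hzbox i' (Set.mem_univ i')
    -- Step 2: minimal cover by S 0
    obtain ⟨F, hF⟩ := minimal_cover (S 0) (hmin 0) hU hUne
    have hFne : F.Nonempty := by
      obtain ⟨k, hk, _⟩ := hF (Classical.arbitrary X)
      exact ⟨k, hk⟩
    set Uk : ℤ → Set X := fun k => ⇑(S 0 ^ k : X ≃ₜ X) ⁻¹' U with hUk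
    set L : Set (Fin (e+1) → X) := Lset p (orbitSet S U) with hL
    set Lk : ℤ → Set (Fin (e+1) → X) := fun k => Lset p (orbitSet S (Uk k)) with hLk
    -- decomposition of the full orbit set
    have hdecomp : ∀ n : ℤ, orbitSet S Set.univ n ⊆ ⋃ k ∈ F, orbitSet S (Uk k) n := by
      rintro n z ⟨x, _, hz⟩
      obtain ⟨k, hk, hxk⟩ := hF x
      exact Set.mem_biUnion hk ⟨x, hxk, hz⟩
    -- covering by the Lk's
    have hLcover : ∀ z : Fin (e+1) → X, ∃ k ∈ F, z ∈ Lk k := by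
      intro z
      by_contra hcon
      push_neg at hcon
      have hOk : ∀ k : ℤ, ∃ O : Set (Fin (e+1) → X), IsOpen O ∧ z ∈ O ∧
          (k ∈ F → {n : ℤ | (orbitSet S (Uk k) n ∩ O).Nonempty} ∉ p) := by
        intro k
        by_cases hk : k ∈ F
        · have := hcon k hk
          simp only [Lk, Lset, Set.mem_setOf_eq] at this
          push_neg at this
          obtain ⟨O, hO, hzO, hbad⟩ := this
          exact ⟨O, hO, hzO, fun _ => hbad⟩
        · exact ⟨Set.univ, isOpen_univ, Set.mem_univ z, fun h => absurd h hk⟩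
      choose Ok hOko hOkz hOkbad using hOk
      set O : Set (Fin (e+1) → X) := ⋂ k ∈ F, Ok k with hO
      have hOo : IsOpen O := isOpen_biInter_finset (fun k _ => hOko k)
      have hzO : z ∈ O := Set.mem_biInter (fun k _ => hOkz k)
      have h1 := gammaDense O hOo ⟨z, hzO⟩
      have h2 : {n : ℤ | (orbitSet S Set.univ n ∩ O).Nonempty} ⊆
          ⋃ k ∈ (↑F : Set ℤ), {n : ℤ | (orbitSet S (Uk k) n ∩ Ok k).Nonempty} := by
        rintro n ⟨w, hw1, hw2⟩
        obtain ⟨k, hk, hwk⟩ := Set.mem_iUnion₂.mp (hdecomp n hw1)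
        refine Set.mem_biUnion hk ⟨w, hwk, ?_⟩
        exact Set.mem_iInter₂.mp hw2 k hk
      have h3 : (⋃ k ∈ (↑F : Set ℤ), {n : ℤ | (orbitSet S (Uk k) n ∩ Ok k).Nonempty}) ∈ p :=
        mem_of_superset h1 h2
      obtain ⟨k, hk, hkp⟩ := (Ultrafilter.finite_biUnion_mem_iff F.finite_toSet).mp h3
      exact hOkbad k hk hkp
    -- Baire category: some Lk has nonempty interior
    have hclosed : ∀ k : ℤ, IsClosed (Lk k) := fun k => isClosed_Lset p _
    have hcup : (⋃ k : {k // k ∈ F}, Lk k.1) = Set.univ := by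
      apply Set.eq_univ_of_forall
      intro z
      obtain ⟨k, hk, hzk⟩ := hLcover z
      exact Set.mem_iUnion.mpr ⟨⟨k, hk⟩, hzk⟩
    obtain ⟨⟨k₀, hk₀⟩, hk₀int⟩ := nonempty_interior_of_iUnion_of_closed
      (fun k : {k // k ∈ F} => hclosed k.1) hcup
    -- transfer back to L via the translation homeomorphism
    have hLint : (interior L).Nonempty := by
      set Dk : (Fin (e+1) → X) ≃ₜ (Fin (e+1) → X) :=
        Homeomorph.piCongrRight (fun _ : Fin (e+1) => (S 0 ^ k₀ : X ≃ₜ X)) with hDk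
      have horb : ∀ n : ℤ, orbitSet S (Uk k₀) n = ⇑Dk ⁻¹' (orbitSet S U n) := by
        intro n
        ext z
        constructor
        · rintro ⟨x, hxU, hz⟩
          refine ⟨((S 0 ^ k₀ : X ≃ₜ X)) x, hxU, ?_⟩
          intro i
          show ((S 0 ^ k₀ : X ≃ₜ X)) (z i) = _
          rw [hz i]
          exact congrArg (fun (f : X ≃ₜ X) => f x) ((hc i 0).zpow_zpow n k₀).symm
        · rintro ⟨x', hx'U, hz⟩
          refine ⟨((S 0 ^ k₀ : X ≃ₜ X)).symm x', ?_, ?_⟩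
          · show ((S 0 ^ k₀ : X ≃ₜ X)) (((S 0 ^ k₀ : X ≃ₜ X)).symm x') ∈ U
            rwa [Homeomorph.apply_symm_apply]
          · intro i
            have h1 : ((S 0 ^ k₀ : X ≃ₜ X)) (z i) = ((S i ^ n : X ≃ₜ X)) x' := hz i
            have h2 : z i = ((S 0 ^ k₀ : X ≃ₜ X)).symm (((S i ^ n : X ≃ₜ X)) x') := by
              rw [← h1, Homeomorph.symm_apply_apply]
            rw [h2]
            have h3 : Commute ((S i ^ n : X ≃ₜ X)) (((S 0 ^ k₀ : X ≃ₜ X))⁻¹) :=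
              ((hc i 0).zpow_zpow n k₀).inv_right
            exact congrArg (fun (f : X ≃ₜ X) => f x') h3.symm
      have hLkL : Lk k₀ = ⇑Dk ⁻¹' L := by
        show Lset p (orbitSet S (Uk k₀)) = ⇑Dk ⁻¹' Lset p (orbitSet S U)
        rw [funext horb]
        exact Lset_preimage p Dk _
      rw [hLkL] at hk₀int
      rw [← Homeomorph.preimage_interior] at hk₀int
      obtain ⟨w, hw⟩ := hk₀int
      exact ⟨Dk w, hw⟩
    -- a box inside L
    obtain ⟨O, hOo, hOne, hOsub⟩ := open_contains_box isOpen_interior hLint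
    have hOsubL : Set.univ.pi O ⊆ L := subset_trans hOsub interior_subset
    -- Step 3: the box orbit family is p-dense
    have boxDense : pDense p (fun n => Set.univ.pi fun i => ⇑(S i ^ n : X ≃ₜ X) '' O i) := by
      intro O' hO' hO'ne
      obtain ⟨W, hWo, hWne, hWsub⟩ := open_contains_box hO' hO'ne
      have hM : (⋂ i : Fin (e+1), {n : ℤ | ∃ x ∈ O i, ((S i ^ n : X ≃ₜ X)) x ∈ W i}) ∈ p :=
        iInter_mem.mpr fun i => hmix i (O i) (W i) (hOo i) (hWo i) (hOne i) (hWne i)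
      refine mem_of_superset hM ?_
      intro n hn
      simp only [Set.mem_iInter, Set.mem_setOf_eq] at hn
      choose xx hxx1 hxx2 using hn
      refine ⟨fun i => ((S i ^ n : X ≃ₜ X)) (xx i), ?_, ?_⟩
      · intro i _
        exact ⟨xx i, hxx1 i, rfl⟩
      · apply hWsub
        intro i _
        exact hxx2 i
    -- Step 4: conclude using idempotency
    intro O' hO' hO'ne
    have hkey : ∀ m : ℤ,
        ((Set.univ.pi fun i => ⇑(S i ^ m : X ≃ₜ X) '' O i) ∩ O').Nonempty →
        {n : ℤ | (orbitSet S U (m + n) ∩ O').Nonempty} ∈ p := by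
      intro m ⟨w', hw'pi, hw'O'⟩
      set w : Fin (e+1) → X := fun i => ((S i ^ m : X ≃ₜ X)).symm (w' i) with hw
      have hwO : w ∈ Set.univ.pi O := by
        intro i _
        obtain ⟨x, hxO, hx⟩ := hw'pi i (Set.mem_univ i)
        have : w i = x := by rw [hw]; simp only [← hx, Homeomorph.symm_apply_apply]
        rw [this]
        exact hxO
      set Phim : (Fin (e+1) → X) ≃ₜ (Fin (e+1) → X) :=
        Homeomorph.piCongrRight (fun i : Fin (e+1) => (S i ^ m : X ≃ₜ X)) with hPhim
      have hO'' : IsOpen (⇑Phim ⁻¹' O') := Phim.isOpen_preimage.mpr hO'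
      have hwO'' : w ∈ ⇑Phim ⁻¹' O' := by
        show Phim w ∈ O'
        have : Phim w = w' := by
          funext i
          show ((S i ^ m : X ≃ₜ X)) (w i) = w' i
          rw [hw]
          exact Homeomorph.apply_symm_apply _ _
        rwa [this]
      have h1 := hOsubL hwO _ hO'' hwO''
      refine mem_of_superset h1 ?_
      rintro n ⟨y, ⟨x, hxU, hy⟩, hyO''⟩
      refine ⟨Phim y, ⟨x, hxU, ?_⟩, hyO''⟩
      intro i
      show ((S i ^ m : X ≃ₜ X)) (y i) = ((S i ^ (m + n) : X ≃ₜ X)) x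
      rw [hy i, zpow_apply_add]
    have hev : ∀ᶠ m in ↑p, ∀ᶠ n in ↑p, (orbitSet S U (m + n) ∩ O').Nonempty := by
      have hbd := boxDense O' hO' hO'ne
      filter_upwards [hbd] with m hm
      exact hkey m hm
    have hev2 : ∀ᶠ N in ↑(p + p), (orbitSet S U N ∩ O').Nonempty :=
      (Ultrafilter.eventually_add p p (fun N => (orbitSet S U N ∩ O').Nonempty)).mpr hev
    rw [hp] at hev2
    exact hev2

end MainInd


section FinalProof
open Filter
attribute [local instance] Ultrafilter.add Ultrafilter.addSemigroup

/-- Linear case: if commuting homeomorphisms `Tᵢ` and all `T_j T_k⁻¹` are minimal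
and mixing along the IP-set `A = {n_α}`, then
`{n : U ∩ T₁^{-n}V₁ ∩ ⋯ ∩ T_d^{-n}V_d ≠ ∅} ∈ 𝒢_A*`. -/
theorem linear_case_commuting {X : Type*} [MetricSpace X] [CompactSpace X]
    (d : ℕ) (T : Fin d → X ≃ₜ X)
    (hcomm : ∀ i j, (T i).trans (T j) = (T j).trans (T i))
    (nseq : ℕ → ℤ)
    (hmix : ∀ i, IsMinimalHomeo (T i) ∧ MixingAlong (T i) nseq)
    (hmix2 : ∀ i j, i ≠ j →
      IsMinimalHomeo ((T j).symm.trans (T i)) ∧ MixingAlong ((T j).symm.trans (T i)) nseq)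
    (U : Set X) (V : Fin d → Set X) (hU : IsOpen U) (hUne : U.Nonempty)
    (hV : ∀ i, IsOpen (V i)) (hVne : ∀ i, (V i).Nonempty) :
    {m : ℤ | (U ∩ ⋂ i, hzpow (T i) m ⁻¹' V i).Nonempty} ∈ dualFam (GA nseq) := by
  intro A hA
  obtain ⟨a0, ha0, hsubA⟩ := hA
  obtain ⟨p, hp, hptails⟩ := exists_idem_tails (ggStream nseq a0)
  -- every member of p is in GA nseq
  have hGG : ∀ B ∈ p, B ∈ GA nseq := by
    intro B hB
    obtain ⟨b, hb1, hb2⟩ := GG_main ha0 hp hptails hB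
    exact ⟨b, hb1, hb2⟩
  -- every set in the dual family is in p
  have hmemp : ∀ N ∈ dualFam (GA nseq), N ∈ p := by
    intro N hN
    by_contra h
    have hc' : Nᶜ ∈ p := Ultrafilter.compl_mem_iff_notMem.mpr h
    obtain ⟨x, hx1, hx2⟩ := hN Nᶜ (hGG _ hc')
    exact hx2 hx1
  -- translate the mixing hypotheses
  have hsetEq : ∀ (T' : X ≃ₜ X) (U' V' : Set X),
      {m : ℤ | (U' ∩ hzpow T' m ⁻¹' V').Nonempty} =
      {n : ℤ | ∃ x ∈ U', ((T' ^ n : X ≃ₜ X)) x ∈ V'} := by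
    intro T' U' V'
    ext n
    simp only [Set.mem_setOf_eq, hzpow_eq_zpow]
    constructor
    · rintro ⟨x, hx1, hx2⟩
      exact ⟨x, hx1, hx2⟩
    · rintro ⟨x, hx1, hx2⟩
      exact ⟨x, hx1, hx2⟩
  have hmixp : ∀ i, mixP p (T i) := by
    intro i U' V' hU' hV' hU'ne hV'ne
    have := hmemp _ ((hmix i).2 U' V' hU' hV' hU'ne hV'ne)
    rwa [hsetEq] at this
  have hminT : ∀ i, IsMinimalHomeo (T i) := fun i => (hmix i).1
  have hcT : ∀ i j, Commute (T i) (T j) := fun i j => commute_of_trans_eq (hcomm i j)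
  have hmul_eq : ∀ i j, (T j).symm.trans (T i) = T i * (T j)⁻¹ := fun i j => rfl
  have hmin2T : ∀ i j, i ≠ j → IsMinimalHomeo (T i * (T j)⁻¹) ∧ mixP p (T i * (T j)⁻¹) := by
    intro i j hij
    obtain ⟨h1, h2⟩ := hmix2 i j hij
    rw [hmul_eq] at h1 h2
    refine ⟨h1, ?_⟩
    intro U' V' hU' hV' hU'ne hV'ne
    have := hmemp _ (h2 U' V' hU' hV' hU'ne hV'ne)
    rwa [hsetEq] at this
  -- apply the main induction
  have hPD := mainInd p hp d T hcT hminT hmixp hmin2T U hU hUne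
  have hbox := hPD (Set.univ.pi V)
    (isOpen_set_pi Set.finite_univ (fun i _ => hV i))
    (Set.univ_pi_nonempty_iff.mpr hVne)
  have htarget : {m : ℤ | (U ∩ ⋂ i, hzpow (T i) m ⁻¹' V i).Nonempty} ∈ p := by
    refine mem_of_superset hbox ?_
    rintro m ⟨z, ⟨x, hxU, hz⟩, hzpi⟩
    refine ⟨x, hxU, Set.mem_iInter.mpr ?_⟩
    intro i
    rw [Set.mem_preimage, hzpow_eq_zpow, ← hz i]
    exact hzpi i (Set.mem_univ i)
  -- the FS-set of the ring is in p and inside A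
  have hFS0 : {m : ℤ | m ∈ Hindman.FS ((ggStream nseq a0).drop 0)} ⊆ sumIdx nseq '' FU a0 := by
    intro m hm
    obtain ⟨s, hs, hsum⟩ := FS_decode hm
    have hget : ∀ i : ℕ, ((ggStream nseq a0).drop 0).get i = sumIdx nseq (a0 i) := by
      intro i
      rw [Stream'.get_drop]
      show sumIdx nseq (a0 (0 + i)) = sumIdx nseq (a0 i)
      rw [Nat.zero_add]
    refine ⟨s.biUnion a0, ⟨s, hs, rfl⟩, ?_⟩
    rw [sumIdx_biUnion nseq (fun u _ v _ huv => ringseq_disj ha0 huv)]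
    rw [hsum]
    exact (Finset.sum_congr rfl fun i _ => hget i).symm
  have hfin := Ultrafilter.nonempty_of_mem (inter_mem htarget (hptails 0))
  obtain ⟨m, hm1, hm2⟩ := hfin
  exact ⟨m, hm1, hsubA (hFS0 hm2)⟩

end FinalProof
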